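/- Ryser's formula with repeated columns: if the distinct columns of an n×n matrix A are c̄_1,…,c̄_R and A has m_j columns equal to c̄_j (so Σ_j m_j = n), then per(A) = (-1)^n · Σ_{(f_1,…,f_R), 0 ≤ f_t ≤ m_t} (-1)^{Σ_t f_t} · (Π_{j=1}^R binom(m_j, f_j)) · Π_{i=1}^n Σ_{k=1}^R f_k · c̄_k(i). -/

import Mathlib

open Finset

/-- The permanent of an `n × n` matrix. -/
def perm {n : ℕ} {R : Type*} [CommRing R] (A : Matrix (Fin n) (Fin n) R) : R :=
  ∑ σ : Equiv.Perm (Fin n), ∏ i, A i (σ i)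

lemma sum_superset_neg_one_pow {α : Type*} [DecidableEq α] [Fintype α] {R : Type*} [CommRing R]
    (T : Finset α) :
    ∑ S ∈ univ.filter (fun S : Finset α => T ⊆ S), (-1 : R) ^ S.card =
      if T = univ then (-1 : R) ^ Fintype.card α else 0 := by
  have h : ∑ S ∈ univ.filter (fun S : Finset α => T ⊆ S), (-1 : R) ^ S.card
      = ∑ U ∈ Tᶜ.powerset, (-1 : R) ^ (U.card + T.card) := by
    refine Finset.sum_bij' (fun S _ => S \ T) (fun U _ => U ∪ T) ?_ ?_ ?_ ?_ ?_
    · intro S hS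
      simp only [mem_filter, mem_univ, true_and] at hS
      simp only [mem_powerset, Finset.subset_iff, mem_sdiff, mem_compl]
      tauto
    · intro U hU
      simp only [mem_powerset] at hU
      simp [Finset.subset_union_right]
    · intro S hS
      simp only [mem_filter, mem_univ, true_and] at hS
      exact Finset.sdiff_union_of_subset hS
    · intro U hU
      simp only [mem_powerset] at hU
      refine Finset.union_sdiff_cancel_right ?_
      exact Finset.disjoint_left.mpr fun x hx hxT => (Finset.mem_compl.mp (hU hx)) hxT
    · intro S hS
      simp only [mem_filter, mem_univ, true_and] at hS
      rw [Finset.card_sdiff_add_card_eq_card hS]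
  rw [h]
  have : ∑ U ∈ Tᶜ.powerset, (-1 : R) ^ (U.card + T.card)
      = (-1 : R) ^ T.card * ∑ U ∈ Tᶜ.powerset, (-1 : R) ^ U.card := by
    rw [Finset.mul_sum]
    refine Finset.sum_congr rfl fun U _ => ?_
    ring
  have hcast : ∑ U ∈ Tᶜ.powerset, (-1 : R) ^ U.card
      = ((∑ U ∈ Tᶜ.powerset, (-1 : ℤ) ^ U.card : ℤ) : R) := by
    push_cast
    rfl
  rw [this, hcast, Finset.sum_powerset_neg_one_pow_card]
  by_cases hT : T = univ
  · have h1 : Tᶜ = ∅ := (compl_eq_empty_iff T).mpr hT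
    simp [hT, h1, Finset.card_univ]
  · have h1 : Tᶜ ≠ ∅ := fun h => hT ((compl_eq_empty_iff T).mp h)
    simp [hT, h1]

lemma ryser_subsets {n : ℕ} {R : Type*} [CommRing R] (A : Matrix (Fin n) (Fin n) R) :
    perm A = (-1 : R) ^ n *
      ∑ S : Finset (Fin n), (-1 : R) ^ S.card * ∏ i, ∑ j ∈ S, A i j := by
  have key : ∑ S : Finset (Fin n), (-1 : R) ^ S.card * ∏ i, ∑ j ∈ S, A i j
      = (-1 : R) ^ n * perm A := by
    have h1 : ∀ S : Finset (Fin n), (-1 : R) ^ S.card * ∏ i, ∑ j ∈ S, A i j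
        = ∑ φ ∈ Fintype.piFinset (fun _ : Fin n => S), (-1 : R) ^ S.card * ∏ i, A i (φ i) := by
      intro S
      rw [Finset.prod_univ_sum (t := fun _ => S) (f := fun i j => A i j), Finset.mul_sum]
    rw [Finset.sum_congr rfl fun S _ => h1 S]
    rw [Finset.sum_comm' (t' := (univ : Finset (Fin n → Fin n)))
      (s' := fun φ => univ.filter (fun S : Finset (Fin n) => Finset.image φ univ ⊆ S))
      (by
        intro S φ
        simp [Fintype.mem_piFinset, Finset.image_subset_iff])]
    have h2 : ∀ φ : Fin n → Fin n,
        ∑ S ∈ univ.filter (fun S : Finset (Fin n) => Finset.image φ univ ⊆ S),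
          (-1 : R) ^ S.card * ∏ i, A i (φ i)
        = (if Finset.image φ univ = univ then (-1 : R) ^ n else 0) * ∏ i, A i (φ i) := by
      intro φ
      rw [← Finset.sum_mul, sum_superset_neg_one_pow]
      simp
    rw [Finset.sum_congr rfl fun φ _ => h2 φ]
    have h3 : ∑ φ : Fin n → Fin n,
        (if Finset.image φ univ = univ then (-1 : R) ^ n else 0) * ∏ i, A i (φ i)
        = ∑ φ ∈ univ.filter (fun φ : Fin n → Fin n => Finset.image φ univ = univ),
            (-1 : R) ^ n * ∏ i, A i (φ i) := by
      rw [Finset.sum_filter]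
      refine Finset.sum_congr rfl fun φ _ => ?_
      split <;> simp
    rw [h3, ← Finset.mul_sum]
    congr 1
    rw [perm]
    refine (Finset.sum_bij (fun (σ : Equiv.Perm (Fin n)) _ => (σ : Fin n → Fin n)) ?_ ?_ ?_ ?_).symm
    · intro σ _
      simp only [mem_filter, mem_univ, true_and]
      exact Finset.eq_univ_of_forall fun x =>
        Finset.mem_image.mpr ⟨σ.symm x, Finset.mem_univ _, σ.apply_symm_apply x⟩
    · intro σ _ σ' _ h
      exact Equiv.coe_fn_injective h
    · intro φ hφ
      simp only [mem_filter, mem_univ, true_and] at hφ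
      have hsurj : Function.Surjective φ := fun x => by
        have : x ∈ Finset.image φ univ := by rw [hφ]; exact Finset.mem_univ x
        obtain ⟨y, _, hy⟩ := Finset.mem_image.mp this
        exact ⟨y, hy⟩
      have hbij : Function.Bijective φ := Finite.surjective_iff_bijective.mp hsurj
      exact ⟨Equiv.ofBijective φ hbij, Finset.mem_univ _, rfl⟩
    · intro σ _
      rfl
  rw [key, ← mul_assoc, ← pow_add, Even.neg_one_pow (Even.add_self n), one_mul]

lemma card_fiber_count {n t : ℕ} (g : Fin n → Fin t) (f : Fin t → ℕ) :
    (univ.filter (fun S : Finset (Fin n) =>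
        (fun k => (S.filter (fun j => g j = k)).card) = f)).card
      = ∏ k, (univ.filter (fun j => g j = k)).card.choose (f k) := by
  have hrw : ∏ k, (univ.filter (fun j => g j = k)).card.choose (f k)
      = (Fintype.piFinset
          (fun k : Fin t => (univ.filter (fun j => g j = k)).powersetCard (f k))).card := by
    rw [Fintype.card_piFinset]
    exact Finset.prod_congr rfl fun k _ => (Finset.card_powersetCard _ _).symm
  rw [hrw]
  refine Finset.card_bij' (fun S _ => fun k => S.filter (fun j => g j = k))
      (fun F _ => univ.biUnion F) ?_ ?_ ?_ ?_
  · intro S hS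
    simp only [mem_filter, mem_univ, true_and] at hS
    rw [Fintype.mem_piFinset]
    intro k
    rw [Finset.mem_powersetCard]
    constructor
    · intro j hj
      simp only [mem_filter] at hj ⊢
      exact ⟨Finset.mem_univ j, hj.2⟩
    · exact congrFun hS k
  · intro F hF
    rw [Fintype.mem_piFinset] at hF
    simp only [mem_filter, mem_univ, true_and]
    funext k
    have hFk : ∀ k, F k ⊆ univ.filter (fun j => g j = k) := fun k =>
      (Finset.mem_powersetCard.mp (hF k)).1
    have heq : (univ.biUnion F).filter (fun j => g j = k) = F k := by
      ext j
      simp only [mem_filter, Finset.mem_biUnion, mem_univ, true_and]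
      constructor
      · rintro ⟨⟨k', hk'⟩, hgj⟩
        have : g j = k' := (Finset.mem_filter.mp (hFk k' hk')).2
        exact (this.symm.trans hgj) ▸ hk'
      · intro hj
        exact ⟨⟨k, hj⟩, (Finset.mem_filter.mp (hFk k hj)).2⟩
    rw [heq, (Finset.mem_powersetCard.mp (hF k)).2]
  · intro S hS
    exact Finset.biUnion_filter_eq_of_maps_to fun j _ => Finset.mem_univ (g j)
  · intro F hF
    rw [Fintype.mem_piFinset] at hF
    funext k
    have hFk : ∀ k, F k ⊆ univ.filter (fun j => g j = k) := fun k =>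
      (Finset.mem_powersetCard.mp (hF k)).1
    ext j
    simp only [mem_filter, Finset.mem_biUnion, mem_univ, true_and]
    constructor
    · rintro ⟨⟨k', hk'⟩, hgj⟩
      have : g j = k' := (Finset.mem_filter.mp (hFk k' hk')).2
      exact (this.symm.trans hgj) ▸ hk'
    · intro hj
      exact ⟨⟨k, hj⟩, (Finset.mem_filter.mp (hFk k hj)).2⟩


theorem ryser_repeated_columns {n t : ℕ} {R : Type*} [CommRing R]
    (A : Matrix (Fin n) (Fin n) R) (c : Fin t → Fin n → R) (m : Fin t → ℕ)
    (g : Fin n → Fin t)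
    (hcol : ∀ j i, A i j = c (g j) i)
    (hcount : ∀ k, (Finset.univ.filter (fun j => g j = k)).card = m k) :
    perm A = (-1 : R) ^ n *
      ∑ f ∈ Fintype.piFinset (fun k : Fin t => Finset.range (m k + 1)),
        (-1 : R) ^ (∑ k, f k) * (∏ k, ((m k).choose (f k) : R)) *
          ∏ i, ∑ k, (f k : R) * c k i := by
  rw [ryser_subsets]
  congr 1
  have hsummand : ∀ S : Finset (Fin n), (-1 : R) ^ S.card * ∏ i, ∑ j ∈ S, A i j
      = (fun f : Fin t → ℕ => (-1 : R) ^ (∑ k, f k) * ∏ i, ∑ k, (f k : R) * c k i)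
          ((fun S : Finset (Fin n) => fun k => (S.filter (fun j => g j = k)).card) S) := by
    intro S
    simp only
    congr 1
    · rw [Finset.card_eq_sum_card_fiberwise (f := g) (t := univ) (fun x _ => mem_univ _)]
    · refine Finset.prod_congr rfl fun i _ => ?_
      rw [← Finset.sum_fiberwise S g (fun j => A i j)]
      refine Finset.sum_congr rfl fun k _ => ?_
      have hc : ∀ j ∈ S.filter (fun j => g j = k), A i j = c k i := by
        intro j hj
        obtain ⟨_, hgj⟩ := Finset.mem_filter.mp hj
        rw [hcol, hgj]
      rw [Finset.sum_congr rfl hc, Finset.sum_const, nsmul_eq_mul]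
  rw [Finset.sum_congr rfl fun S _ => hsummand S]
  rw [Finset.sum_comp (fun f : Fin t → ℕ => (-1 : R) ^ (∑ k, f k) * ∏ i, ∑ k, (f k : R) * c k i)
    (fun S : Finset (Fin n) => fun k => (S.filter (fun j => g j = k)).card)]
  have himg : (univ : Finset (Finset (Fin n))).image
      (fun S : Finset (Fin n) => fun k => (S.filter (fun j => g j = k)).card)
      ⊆ Fintype.piFinset (fun k : Fin t => Finset.range (m k + 1)) := by
    intro f hf
    rw [Fintype.mem_piFinset]
    intro k
    obtain ⟨S, _, rfl⟩ := Finset.mem_image.mp hf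
    rw [Finset.mem_range, Nat.lt_succ_iff, ← hcount k]
    exact Finset.card_le_card (Finset.filter_subset_filter _ (Finset.subset_univ S))
  rw [Finset.sum_subset himg (fun f _ hf => by
    have h0 : (univ.filter (fun S : Finset (Fin n) =>
        (fun k => (S.filter (fun j => g j = k)).card) = f)).card = 0 := by
      rw [Finset.card_eq_zero, Finset.filter_eq_empty_iff]
      intro S _ h
      exact hf (Finset.mem_image.mpr ⟨S, mem_univ _, h⟩)
    rw [h0, zero_smul])]
  refine Finset.sum_congr rfl fun f hf => ?_
  rw [card_fiber_count g f]
  have hch : ∏ k, (univ.filter (fun j => g j = k)).card.choose (f k)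
      = ∏ k, (m k).choose (f k) := Finset.prod_congr rfl fun k _ => by rw [hcount]
  rw [hch, nsmul_eq_mul, Nat.cast_prod]
  ring
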